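/- Let k ≥ 2 be an integer, let F : ℤ → ℤ be any k-step Fibonacci sequence, and let c be an integer. Then the subsequence G : ℤ → ℤ defined by G(n) = F(k·n + c) satisfies, for every integer n, G(n) = ∑_{i=1}^{k} P(k,i) · G(n - i). -/

import Mathlib

def P : ℕ → ℕ → ℤ
  | 0, 0 => -1
  | 0, _ + 1 => 0
  | _ + 1, 0 => -1
  | i + 1, j + 1 => 2 * P i (j + 1) - P i j

lemma P_eq_zero : ∀ i j : ℕ, i < j → P i j = 0 := by
  intro i
  induction i with
  | zero =>
    intro j hj
    cases j with
    | zero => omega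
    | succ j => rfl
  | succ i ih =>
    intro j hj
    cases j with
    | zero => omega
    | succ j =>
      show 2 * P i (j + 1) - P i j = 0
      rw [ih (j + 1) (by omega), ih j (by omega)]
      ring

lemma sum_Icc_one (k : ℕ) (f : ℕ → ℤ) :
    ∑ i ∈ Finset.Icc 1 k, f i = ∑ i ∈ Finset.range k, f (i + 1) := by
  rw [← Finset.Ico_add_one_right_eq_Icc, Finset.sum_Ico_eq_sum_range]
  simp only [Nat.add_sub_cancel]
  exact Finset.sum_congr rfl fun i _ => by rw [Nat.add_comm]

/-- For `k ≥ 2`, a `k`-step Fibonacci sequence `F : ℤ → ℤ`, and any integer `c`,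
the subsequence `G n = F (k*n + c)` satisfies `G n = ∑_{i=1}^k P k i * G (n - i)`. -/
theorem kstep_mod_subsequence_recursion (k : ℕ) (hk : 2 ≤ k) (F : ℤ → ℤ)
    (hF : ∀ n : ℤ, F n = ∑ i ∈ Finset.Icc 1 k, F (n - (i : ℤ)))
    (c : ℤ) (G : ℤ → ℤ) (hG : ∀ n : ℤ, G n = F ((k : ℤ) * n + c)) :
    ∀ n : ℤ, G n = ∑ i ∈ Finset.Icc 1 k, P k i * G (n - (i : ℤ)) := by
  -- rewrite hF with range sums
  have hF' : ∀ n : ℤ, F n = ∑ i ∈ Finset.range k, F (n - 1 - (i : ℤ)) := by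
    intro n
    rw [hF n, sum_Icc_one k (fun i => F (n - (i : ℤ)))]
    refine Finset.sum_congr rfl fun i _ => ?_
    congr 1
    push_cast
    ring
  -- Lemma A: the (k+1)-term two-coefficient recurrence
  have hA : ∀ m : ℤ, F (m - (k : ℤ)) = 2 * F m - F (m + 1) := by
    intro m
    obtain ⟨K, rfl⟩ : ∃ K, k = K + 1 := ⟨k - 1, by omega⟩
    have h1 : F (m + 1) = ∑ i ∈ Finset.range (K + 1), F (m - (i : ℤ)) := by
      rw [hF' (m + 1)]
      refine Finset.sum_congr rfl fun i _ => ?_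
      congr 1; ring
    rw [Finset.sum_range_succ' (fun i => F (m - (i : ℤ))) K] at h1
    have h2 : F m = ∑ i ∈ Finset.range (K + 1), F (m - 1 - (i : ℤ)) := hF' m
    rw [Finset.sum_range_succ (fun i => F (m - 1 - (i : ℤ))) K] at h2
    have e1 : ∀ i ∈ Finset.range K, F (m - ((i + 1 : ℕ) : ℤ)) = F (m - 1 - (i : ℤ)) := by
      intro i _; congr 1; push_cast; ring
    rw [Finset.sum_congr rfl e1] at h1
    have e2 : F (m - (((K : ℕ) + 1 : ℕ) : ℤ)) = F (m - 1 - (K : ℤ)) := by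
      congr 1; push_cast; ring
    push_cast at e2 ⊢
    simp only [Nat.cast_zero, sub_zero] at h1
    omega
  -- the operator iterate
  set step : (ℤ → ℤ) → (ℤ → ℤ) := fun g m => 2 * g m - g (m + 1) with hstep
  set Q : ℕ → ℤ → ℤ := fun i => step^[i] F with hQdef
  have hQ0 : ∀ m, Q 0 m = F m := fun m => rfl
  have hQsucc : ∀ i m, Q (i + 1) m = 2 * Q i m - Q i (m + 1) := by
    intro i m
    show (step^[i + 1] F) m = _
    rw [Function.iterate_succ_apply']
  -- Q i m = F (m - i*k)
  have hQ : ∀ i : ℕ, ∀ m : ℤ, Q i m = F (m - (i : ℤ) * (k : ℤ)) := by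
    intro i
    induction i with
    | zero => intro m; rw [hQ0]; norm_num
    | succ i ih =>
      intro m
      rw [hQsucc, ih m, ih (m + 1)]
      have := hA (m - (i : ℤ) * (k : ℤ))
      rw [show m - (i : ℤ) * (k : ℤ) - (k : ℤ) = m - ((i : ℤ) + 1) * (k : ℤ) by ring,
        show m - (i : ℤ) * (k : ℤ) + 1 = m + 1 - (i : ℤ) * (k : ℤ) by ring] at this
      push_cast
      linarith [this]
  -- key summation identity
  have hS : ∀ r : ℕ, ∀ m : ℤ,
      ∑ i ∈ Finset.range (r + 1), P r i * Q i m
        = -F (m + (r : ℤ)) + ∑ s ∈ Finset.range r, F (m + (s : ℤ)) := by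
    intro r
    induction r with
    | zero =>
      intro m
      simp [hQ0, P]
    | succ r ih =>
      intro m
      rw [Finset.sum_range_succ' (fun i => P (r + 1) i * Q i m) (r + 1)]
      have hP0 : P (r + 1) 0 = -1 := rfl
      have key : ∀ i ∈ Finset.range (r + 1),
          P (r + 1) (i + 1) * Q (i + 1) m
            = 2 * (P r (i + 1) * Q (i + 1) m) - (2 * (P r i * Q i m) - P r i * Q i (m + 1)) := by
        intro i _
        rw [show P (r + 1) (i + 1) = 2 * P r (i + 1) - P r i from rfl, hQsucc]
        ring
      rw [Finset.sum_congr rfl key]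
      rw [Finset.sum_sub_distrib, Finset.sum_sub_distrib, ← Finset.mul_sum, ← Finset.mul_sum]
      have s1 : ∑ i ∈ Finset.range (r + 1), P r (i + 1) * Q (i + 1) m
          = (∑ i ∈ Finset.range (r + 1), P r i * Q i m) + F m := by
        have h3 := Finset.sum_range_succ' (fun i => P r i * Q i m) (r + 1)
        rw [Finset.sum_range_succ (fun i => P r i * Q i m) (r + 1)] at h3
        rw [P_eq_zero r (r + 1) (by omega)] at h3
        simp only [hQ0] at h3 ⊢
        have hPr0 : P r 0 = -1 := by cases r <;> rfl
        rw [hPr0] at h3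
        linarith [h3]
      rw [s1, ih m, ih (m + 1)]
      rw [Finset.sum_range_succ' (fun s => F (m + (s : ℤ))) r]
      have e3 : ∀ s ∈ Finset.range r, F (m + 1 + (s : ℤ)) = F (m + ((s + 1 : ℕ) : ℤ)) := by
        intro s _; congr 1; push_cast; ring
      rw [Finset.sum_congr rfl e3]
      have e4 : F (m + ((r + 1 : ℕ) : ℤ)) = F (m + 1 + (r : ℤ)) := by
        congr 1; push_cast; ring
      rw [hP0, hQ0, e4]
      simp only [Nat.cast_zero, add_zero]
      ring
  -- evaluate at r = k : RHS is 0 by hF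
  intro n
  set m : ℤ := (k : ℤ) * n + c with hm
  have hzero : -F (m + (k : ℤ)) + ∑ s ∈ Finset.range k, F (m + (s : ℤ)) = 0 := by
    have h := hF' (m + (k : ℤ))
    have hrefl : ∑ i ∈ Finset.range k, F (m + (k : ℤ) - 1 - (i : ℤ))
        = ∑ s ∈ Finset.range k, F (m + (s : ℤ)) := by
      rw [← Finset.sum_range_reflect (fun s => F (m + (s : ℤ))) k]
      refine Finset.sum_congr rfl fun i hi => ?_
      rw [Finset.mem_range] at hi
      congr 1
      have hc : ((k - 1 - i : ℕ) : ℤ) = (k : ℤ) - 1 - (i : ℤ) := by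
        have h1 : (1 : ℕ) ≤ k := by omega
        have h2 : i ≤ k - 1 := by omega
        push_cast [Nat.cast_sub h2, Nat.cast_sub h1]
        omega
      rw [hc]; ring
    rw [hrefl] at h
    omega
  have hsplit := hS k m
  rw [Finset.sum_range_succ' (fun i => P k i * Q i m) k, hzero] at hsplit
  have hPk0 : P k 0 = -1 := by cases k with | zero => omega | succ => rfl
  rw [hPk0, hQ0] at hsplit
  -- convert Icc sum to range sum
  have hIcc : ∑ i ∈ Finset.Icc 1 k, P k i * G (n - (i : ℤ))
      = ∑ i ∈ Finset.range k, P k (i + 1) * Q (i + 1) m := by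
    rw [sum_Icc_one k (fun i => P k i * G (n - (i : ℤ)))]
    refine Finset.sum_congr rfl fun i _ => ?_
    rw [hG, hQ, hm]
    congr 2
    push_cast
    ring
  rw [hIcc, hG n, ← hm]
  linarith [hsplit]
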